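/- Define z_h = (5/11)·(1 + (2−h)/(2(6h−1−11/h)))/(1 + h/(2(6h−1−11/h))) for integers h ≥ 2. Then the sequence (z_h) for h ≥ 4 is monotone decreasing, lim_{h→∞} z_h = 5/13, and z_h > ξ for all h ≥ 2, where ξ = 2/(2 + 6/1.364²). -/

import Mathlib

lemma zsimp (x : ℝ) (hx : 2 ≤ x) :
    (5/11) * (1 + (2 - x) / (2 * (6 * x - 1 - 11 / x)))
        / (1 + x / (2 * (6 * x - 1 - 11 / x)))
      = 5 * (x^2 - 2) / (13 * x^2 - 2 * x - 22) := by
  have hx0 : x ≠ 0 := by nlinarith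
  have hD : 6 * x - 1 - 11 / x > 0 := by
    rw [gt_iff_lt, sub_pos, div_lt_iff₀ (by linarith)]
    nlinarith
  have hden : (13 : ℝ) * x^2 - 2 * x - 22 > 0 := by nlinarith
  have hden2 : (12 : ℝ) * x^2 - 2 * x - 22 > 0 := by nlinarith
  have h1 : 1 + x / (2 * (6 * x - 1 - 11 / x)) > 0 := by positivity
  rw [div_eq_div_iff (by positivity) (by positivity)]
  have hDx : 2 * (6 * x - 1 - 11 / x) = (12 * x^2 - 2 * x - 22) / x := by
    field_simp; ring
  rw [hDx]
  field_simp [show x * (x * 12 - 2) - 22 ≠ 0 by nlinarith]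
  ring

theorem stmt_16
    (z : ℕ → ℝ)
    (hz : ∀ h : ℕ, z h = (5/11) * (1 + (2 - (h : ℝ)) / (2 * (6 * (h : ℝ) - 1 - 11 / (h : ℝ))))
        / (1 + (h : ℝ) / (2 * (6 * (h : ℝ) - 1 - 11 / (h : ℝ)))))
    (ξ : ℝ) (hξ : ξ = 2 / (2 + 6 / (1.364 : ℝ)^2)) :
    (∀ h : ℕ, 4 ≤ h → z (h + 1) < z h) ∧
    Filter.Tendsto z Filter.atTop (nhds (5/13)) ∧
    (∀ h : ℕ, 2 ≤ h → ξ < z h) := by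
  have key : ∀ h : ℕ, 2 ≤ h →
      z h = 5 * ((h : ℝ)^2 - 2) / (13 * (h : ℝ)^2 - 2 * (h : ℝ) - 22) := by
    intro h hh
    have hx : (2 : ℝ) ≤ (h : ℝ) := by exact_mod_cast hh
    rw [hz h, zsimp _ hx]
  have hdenpos : ∀ x : ℝ, 2 ≤ x → (0 : ℝ) < 13 * x^2 - 2 * x - 22 := by
    intro x hx; nlinarith
  refine ⟨?_, ?_, ?_⟩
  · intro h hh
    have hx : (4 : ℝ) ≤ (h : ℝ) := by exact_mod_cast hh
    rw [key h (by omega), key (h + 1) (by omega)]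
    push_cast
    rw [div_lt_div_iff₀ (hdenpos _ (by linarith)) (hdenpos _ (by linarith))]
    nlinarith
  · have heq : ∀ᶠ h : ℕ in Filter.atTop,
        (5 - 10 / (h : ℝ)^2) / (13 - 2 / (h : ℝ) - 22 / (h : ℝ)^2) = z h := by
      filter_upwards [Filter.eventually_ge_atTop 2] with h hh
      have hx : (2 : ℝ) ≤ (h : ℝ) := by exact_mod_cast hh
      have hx0 : (h : ℝ) ≠ 0 := by positivity
      rw [key h hh]
      have hpos : (0:ℝ) < 13 - 2/(h:ℝ) - 22/(h:ℝ)^2 := by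
        have ha : 2/(h:ℝ) ≤ 1 := by rw [div_le_one (by linarith)]; linarith
        have hb : 22/(h:ℝ)^2 ≤ 6 := by rw [div_le_iff₀ (by positivity)]; nlinarith
        linarith
      rw [div_eq_div_iff hpos.ne' (hdenpos _ hx).ne']
      field_simp
      ring
    refine Filter.Tendsto.congr' heq ?_
    have h1 : Filter.Tendsto (fun h : ℕ => 1 / (h : ℝ)) Filter.atTop (nhds 0) :=
      tendsto_one_div_atTop_nhds_zero_nat
    have h2 : Filter.Tendsto (fun h : ℕ => 1 / (h : ℝ)^2) Filter.atTop (nhds 0) := by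
      have := h1.mul h1
      simpa [one_div, mul_pow, pow_two] using this
    have hnum : Filter.Tendsto (fun h : ℕ => 5 - 10 / (h : ℝ)^2) Filter.atTop (nhds 5) := by
      have := (tendsto_const_nhds (x := (5:ℝ)) (f := Filter.atTop (α := ℕ))).sub
        (h2.const_mul 10)
      simpa [mul_one_div, div_eq_mul_inv] using this
    have hden : Filter.Tendsto (fun h : ℕ => 13 - 2 / (h : ℝ) - 22 / (h : ℝ)^2)
        Filter.atTop (nhds 13) := by
      have := ((tendsto_const_nhds (x := (13:ℝ)) (f := Filter.atTop (α := ℕ))).sub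
        (h1.const_mul 2)).sub (h2.const_mul 22)
      simpa [mul_one_div, div_eq_mul_inv] using this
    have := hnum.div hden (by norm_num)
    exact this
  · intro h hh
    have hx : (2 : ℝ) ≤ (h : ℝ) := by exact_mod_cast hh
    rw [key h hh, hξ]
    have h136 : ((1.364 : ℝ))^2 = 1.860496 := by norm_num
    rw [h136]
    rw [div_lt_div_iff₀ (by norm_num) (hdenpos _ hx)]
    nlinarith
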